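/- Let K': ℝ² → ℝ be a function satisfying |K'(z) - K'(w)| ≲ ‖z-w‖^θ (‖z‖^{-2-θ} + ‖w‖^{-2-θ}) for all θ ∈ (0,1]. Let α ∈ (-1,0) and η ∈ (0, 1+α). Then ∫_{ℝ²} |K'(u - w) - K'(-w)| · ‖w‖^α dw ≲ ‖u‖^η uniformly over u ∈ ℝ², where implicitly the integrand is supported in a fixed compact set (‖w‖, ‖u-w‖ ≤ C). -/

import Mathlib

open MeasureTheory Real
open scoped ENNReal

/-- The parabolic norm `‖(t,x)‖ = √|t| + |x|` on `ℝ²`. -/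
noncomputable def pnorm (z : ℝ × ℝ) : ℝ := Real.sqrt |z.1| + |z.2|

lemma pnorm_nonneg (z : ℝ × ℝ) : 0 ≤ pnorm z :=
  add_nonneg (Real.sqrt_nonneg _) (abs_nonneg _)

lemma pnorm_pos {z : ℝ × ℝ} (hz : z ≠ 0) : 0 < pnorm z := by
  rcases (pnorm_nonneg z).lt_or_eq with h | h
  · exact h
  · exfalso
    apply hz
    have h' : Real.sqrt |z.1| + |z.2| = 0 := h.symm
    have h1 : Real.sqrt |z.1| = 0 := by
      linarith [Real.sqrt_nonneg |z.1|, abs_nonneg z.2]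
    have h2 : |z.2| = 0 := by linarith [Real.sqrt_nonneg |z.1|]
    have hz1 : |z.1| = 0 := by nlinarith [Real.sq_sqrt (abs_nonneg z.1)]
    exact Prod.ext (abs_eq_zero.mp hz1) (abs_eq_zero.mp h2)

lemma pnorm_neg (z : ℝ × ℝ) : pnorm (-z) = pnorm z := by
  simp [pnorm]

lemma pnorm_measurable : Measurable pnorm := by
  unfold pnorm; fun_prop

/-- 1-D integrability of `|t|^r` near `0` for `-1 < r < 0`. -/
lemma oneD {r c : ℝ} (hr : -1 < r) (hc : 0 < c) :
    ∫⁻ t in Set.Icc (-c) c, ENNReal.ofReal (|t| ^ r) < ⊤ := by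
  have hpos : ∫⁻ t in Set.Ioo 0 c, ENNReal.ofReal (|t| ^ r) < ⊤ := by
    have hint : IntegrableOn (fun t : ℝ => t ^ r) (Set.Ioo 0 c) :=
      (intervalIntegral.integrableOn_Ioo_rpow_iff hc).mpr hr
    have hcong : ∫⁻ t in Set.Ioo 0 c, ENNReal.ofReal (|t| ^ r)
        = ∫⁻ t in Set.Ioo 0 c, ENNReal.ofReal (t ^ r) :=
      setLIntegral_congr_fun measurableSet_Ioo
        (fun t ht => by rw [abs_of_pos ht.1])
    rw [hcong]
    exact hint.setLIntegral_lt_top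
  have hneg : ∫⁻ t in Set.Ioo (-c) 0, ENNReal.ofReal (|t| ^ r)
      = ∫⁻ t in Set.Ioo 0 c, ENNReal.ofReal (|t| ^ r) := by
    have hkey := (Measure.measurePreserving_neg (volume : Measure ℝ)).setLIntegral_comp_preimage_emb
      (MeasurableEquiv.neg ℝ).measurableEmbedding
      (fun t => ENNReal.ofReal (|t| ^ r)) (Set.Ioo 0 c)
    have hpre : (fun t : ℝ => -t) ⁻¹' Set.Ioo 0 c = Set.Ioo (-c) 0 := by
      ext t; simp only [Set.mem_preimage, Set.mem_Ioo]; constructor <;> intro h <;>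
        constructor <;> linarith [h.1, h.2]
    have habs : ∀ t : ℝ, ENNReal.ofReal (|(-t)| ^ r) = ENNReal.ofReal (|t| ^ r) := fun t => by
      rw [abs_neg]
    rw [← hkey]
    rw [show (Neg.neg ⁻¹' Set.Ioo 0 c : Set ℝ) = Set.Ioo (-c) 0 from hpre]
    exact setLIntegral_congr_fun measurableSet_Ioo (fun t _ => (habs t).symm)
  have hsets : (Set.Icc (-c) c : Set ℝ) =ᵐ[volume]
      ((Set.Ioo (-c) 0 ∪ Set.Ioo 0 c : Set ℝ)) := by
    rw [MeasureTheory.ae_eq_set]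
    have hfin : (volume : Measure ℝ) ({-c, 0, c} : Set ℝ) = 0 :=
      (Set.toFinite ({-c, 0, c} : Set ℝ)).measure_zero _
    constructor
    · refine measure_mono_null ?_ hfin
      intro x hx
      obtain ⟨⟨hl, hr2⟩, hnot⟩ := hx
      simp only [Set.mem_union, Set.mem_Ioo, not_or, not_and, not_lt] at hnot
      rcases lt_trichotomy x 0 with h | h | h
      · have hx' : x = -c := le_antisymm (by
          by_contra hcon
          push_neg at hcon
          linarith [hnot.1 hcon]) hl
        simp [hx']
      · simp [h]
      · have hx' : x = c := le_antisymm hr2 (hnot.2 h)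
        simp [hx']
    · have hemp : ((Set.Ioo (-c) 0 ∪ Set.Ioo 0 c : Set ℝ)) \ Set.Icc (-c) c = ∅ := by
        rw [Set.diff_eq_empty]
        exact Set.union_subset (Set.Ioo_subset_Icc_self.trans (Set.Icc_subset_Icc le_rfl hc.le))
          (Set.Ioo_subset_Icc_self.trans (Set.Icc_subset_Icc (by linarith) le_rfl))
      rw [hemp]; exact measure_empty
  rw [setLIntegral_congr hsets, lintegral_union measurableSet_Ioo
    (by apply Set.disjoint_left.mpr; intro x hx1 hx2; exact absurd hx1.2 (not_lt.mpr hx2.1.le))]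
  exact ENNReal.add_lt_top.mpr ⟨hneg ▸ hpos, hpos⟩

/-- 2-D finiteness: `∫_{‖w‖ ≤ R} ‖w‖^β dw < ∞` for `-3 < β < -2`. -/
lemma twoD {β R : ℝ} (hβ1 : -3 < β) (hβ2 : β < -2) (hR : 0 < R) :
    ∫⁻ w : ℝ × ℝ in {w | pnorm w ≤ R}, ENNReal.ofReal (pnorm w ^ β) < ⊤ := by
  set p : ℝ := (β - 1) / 2 with hp
  set q : ℝ := (β + 1) / 2 with hq
  have hpq : p + q = β := by rw [hp, hq]; ring
  have hp_le : p ≤ 0 := by rw [hp]; linarith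
  have hq_le : q ≤ 0 := by rw [hq]; linarith
  have hp2 : -1 < p / 2 := by rw [hp]; linarith
  have hq1 : -1 < q := by rw [hq]; linarith
  set g : ℝ → ℝ≥0∞ := fun t =>
    Set.indicator (Set.Icc (-(R ^ 2)) (R ^ 2)) (fun t => ENNReal.ofReal (|t| ^ (p / 2))) t with hg
  set h : ℝ → ℝ≥0∞ := fun x =>
    Set.indicator (Set.Icc (-R) R) (fun x => ENNReal.ofReal (|x| ^ q)) x with hh
  have hSm : MeasurableSet {w : ℝ × ℝ | pnorm w ≤ R} :=
    measurableSet_le pnorm_measurable measurable_const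
  -- a.e. bound
  have hax : ∀ᵐ w : ℝ × ℝ, w.1 ≠ 0 ∧ w.2 ≠ 0 := by
    have h1 : (volume : Measure (ℝ × ℝ)) {w : ℝ × ℝ | w.1 = 0} = 0 := by
      have : {w : ℝ × ℝ | w.1 = 0} = ({0} : Set ℝ) ×ˢ (Set.univ : Set ℝ) := by
        ext w
        simp only [Set.mem_setOf_eq, Set.mem_prod, Set.mem_singleton_iff, Set.mem_univ, and_true]
      rw [Measure.volume_eq_prod, this, Measure.prod_prod]; simp
    have h2 : (volume : Measure (ℝ × ℝ)) {w : ℝ × ℝ | w.2 = 0} = 0 := by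
      have : {w : ℝ × ℝ | w.2 = 0} = (Set.univ : Set ℝ) ×ˢ ({0} : Set ℝ) := by
        ext w
        simp only [Set.mem_setOf_eq, Set.mem_prod, Set.mem_singleton_iff, Set.mem_univ, true_and]
      rw [Measure.volume_eq_prod, this, Measure.prod_prod]; simp
    have hu : (volume : Measure (ℝ × ℝ)) ({w : ℝ × ℝ | w.1 = 0} ∪ {w : ℝ × ℝ | w.2 = 0}) = 0 :=
      measure_union_null h1 h2
    rw [MeasureTheory.ae_iff]
    refine measure_mono_null ?_ hu
    intro w hw
    simp only [Set.mem_setOf_eq, not_and_or, not_not] at hw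
    simpa using hw
  have key : ∀ᵐ w : ℝ × ℝ,
      Set.indicator {w : ℝ × ℝ | pnorm w ≤ R} (fun w => ENNReal.ofReal (pnorm w ^ β)) w
        ≤ g w.1 * h w.2 := by
    filter_upwards [hax] with w hw
    obtain ⟨hw1, hw2⟩ := hw
    by_cases hmem : w ∈ {w : ℝ × ℝ | pnorm w ≤ R}
    · rw [Set.indicator_of_mem hmem]
      have hle : Real.sqrt |w.1| + |w.2| ≤ R := hmem
      have hs0 : 0 < Real.sqrt |w.1| := Real.sqrt_pos.mpr (abs_pos.mpr hw1)
      have hy0 : 0 < |w.2| := abs_pos.mpr hw2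
      have hsR : Real.sqrt |w.1| ≤ R := by linarith
      have hyR : |w.2| ≤ R := by linarith
      have hw1R : |w.1| ≤ R ^ 2 := by
        nlinarith [Real.sq_sqrt (abs_nonneg w.1)]
      have hg_eq : g w.1 = ENNReal.ofReal (|w.1| ^ (p / 2)) := by
        show Set.indicator (Set.Icc (-R ^ 2) (R ^ 2)) (fun t => ENNReal.ofReal (|t| ^ (p / 2))) w.1
          = ENNReal.ofReal (|w.1| ^ (p / 2))
        have hmem1 : w.1 ∈ Set.Icc (-R ^ 2) (R ^ 2) :=
          Set.mem_Icc.mpr ⟨(abs_le.mp hw1R).1, (abs_le.mp hw1R).2⟩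
        exact Set.indicator_of_mem hmem1 _
      have hh_eq : h w.2 = ENNReal.ofReal (|w.2| ^ q) := by
        show Set.indicator (Set.Icc (-R) R) (fun x => ENNReal.ofReal (|x| ^ q)) w.2
          = ENNReal.ofReal (|w.2| ^ q)
        have hmem2 : w.2 ∈ Set.Icc (-R) R :=
          Set.mem_Icc.mpr ⟨(abs_le.mp hyR).1, (abs_le.mp hyR).2⟩
        exact Set.indicator_of_mem hmem2 _
      have hmax : 0 < max (Real.sqrt |w.1|) |w.2| := lt_max_of_lt_left hs0
      have step1 : pnorm w ^ β ≤ (max (Real.sqrt |w.1|) |w.2|) ^ β := by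
        apply Real.rpow_le_rpow_of_nonpos hmax _ (by linarith)
        exact max_le (le_add_of_nonneg_right hy0.le) (le_add_of_nonneg_left hs0.le)
      have step2 : (max (Real.sqrt |w.1|) |w.2|) ^ β
          = (max (Real.sqrt |w.1|) |w.2|) ^ p * (max (Real.sqrt |w.1|) |w.2|) ^ q := by
        rw [← Real.rpow_add hmax, hpq]
      have step3 : (max (Real.sqrt |w.1|) |w.2|) ^ p ≤ Real.sqrt |w.1| ^ p :=
        Real.rpow_le_rpow_of_nonpos hs0 (le_max_left _ _) hp_le
      have step4 : (max (Real.sqrt |w.1|) |w.2|) ^ q ≤ |w.2| ^ q :=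
        Real.rpow_le_rpow_of_nonpos hy0 (le_max_right _ _) hq_le
      have hsp : Real.sqrt |w.1| ^ p = |w.1| ^ (p / 2) := by
        rw [Real.sqrt_eq_rpow, ← Real.rpow_mul (abs_nonneg w.1)]
        congr 1
        ring
      have hineq : pnorm w ^ β ≤ |w.1| ^ (p / 2) * |w.2| ^ q := by
        calc pnorm w ^ β ≤ (max (Real.sqrt |w.1|) |w.2|) ^ β := step1
          _ = (max (Real.sqrt |w.1|) |w.2|) ^ p * (max (Real.sqrt |w.1|) |w.2|) ^ q := step2
          _ ≤ Real.sqrt |w.1| ^ p * |w.2| ^ q :=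
              mul_le_mul step3 step4 (Real.rpow_nonneg hmax.le q) (Real.rpow_nonneg hs0.le p)
          _ = |w.1| ^ (p / 2) * |w.2| ^ q := by rw [hsp]
      rw [hg_eq, hh_eq, ← ENNReal.ofReal_mul (Real.rpow_nonneg (abs_nonneg w.1) _)]
      exact ENNReal.ofReal_le_ofReal hineq
    · rw [Set.indicator_of_notMem hmem]; exact zero_le
  have hgm : Measurable g := Measurable.indicator (by fun_prop) measurableSet_Icc
  have hhm : Measurable h := Measurable.indicator (by fun_prop) measurableSet_Icc
  calc ∫⁻ w : ℝ × ℝ in {w | pnorm w ≤ R}, ENNReal.ofReal (pnorm w ^ β)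
      = ∫⁻ w : ℝ × ℝ, Set.indicator {w : ℝ × ℝ | pnorm w ≤ R}
          (fun w => ENNReal.ofReal (pnorm w ^ β)) w := (lintegral_indicator hSm _).symm
    _ ≤ ∫⁻ w : ℝ × ℝ, g w.1 * h w.2 := lintegral_mono_ae key
    _ = (∫⁻ t, g t) * (∫⁻ x, h x) := by
        rw [Measure.volume_eq_prod]
        exact lintegral_prod_mul hgm.aemeasurable hhm.aemeasurable
    _ < ⊤ := by
        apply ENNReal.mul_lt_top
        · rw [hg, lintegral_indicator measurableSet_Icc]
          exact oneD hp2 (by positivity)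
        · rw [hh, lintegral_indicator measurableSet_Icc]
          exact oneD hq1 hR

/-- If `K'` satisfies `|K'(z)-K'(w)| ≲_θ ‖z-w‖^θ (‖z‖^{-2-θ}+‖w‖^{-2-θ})` for all
`θ ∈ (0,1]`, `α ∈ (-1,0)` and `η ∈ (0,1+α)`, then
`∫ |K'(u-w)-K'(-w)| ‖w‖^α dw ≲ ‖u‖^η` uniformly over `u`, the integral being
restricted to a fixed compact region `‖w‖, ‖u-w‖ ≤ R`. -/
theorem stmt12 (K' : ℝ × ℝ → ℝ)
    (hK : ∀ θ : ℝ, θ ∈ Set.Ioc (0:ℝ) 1 → ∃ Cθ : ℝ, 0 < Cθ ∧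
      ∀ z w : ℝ × ℝ, z ≠ 0 → w ≠ 0 →
        |K' z - K' w| ≤ Cθ * pnorm (z - w) ^ θ * (pnorm z ^ (-2 - θ) + pnorm w ^ (-2 - θ)))
    (α η R : ℝ) (hα : α ∈ Set.Ioo (-1 : ℝ) 0) (hη : η ∈ Set.Ioo (0:ℝ) (1 + α)) (hR : 0 < R) :
    ∃ C : ℝ, 0 < C ∧ ∀ u : ℝ × ℝ,
      ∫⁻ w in {w : ℝ × ℝ | pnorm w ≤ R ∧ pnorm (u - w) ≤ R},
        ENNReal.ofReal (|K' (u - w) - K' (-w)| * pnorm w ^ α) ≤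
        ENNReal.ofReal (C * pnorm u ^ η) := by
  obtain ⟨hα1, hα2⟩ := hα
  obtain ⟨hη1, hη2⟩ := hη
  obtain ⟨Cη, hCη, hKb⟩ := hK η ⟨hη1, by linarith⟩
  set β : ℝ := α - 2 - η with hβ
  have hβ1 : -3 < β := by rw [hβ]; linarith
  have hβ2 : β < -2 := by rw [hβ]; linarith
  set M := ∫⁻ w : ℝ × ℝ in {w | pnorm w ≤ R}, ENNReal.ofReal (pnorm w ^ β) with hMdef
  have hM : M < ⊤ := twoD hβ1 hβ2 hR
  have hMr : 0 ≤ M.toReal := ENNReal.toReal_nonneg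
  refine ⟨Cη * (3 * M.toReal + 1), by positivity, fun u => ?_⟩
  set S : Set (ℝ × ℝ) := {w : ℝ × ℝ | pnorm w ≤ R ∧ pnorm (u - w) ≤ R} with hSdef
  have hru : 0 ≤ pnorm u ^ η := Real.rpow_nonneg (pnorm_nonneg u) η
  have hf1m : Measurable (fun w : ℝ × ℝ => ENNReal.ofReal (pnorm w ^ β)) := by
    unfold pnorm; fun_prop
  -- a.e. pointwise bound
  have hae : ∀ᵐ w ∂((volume : Measure (ℝ × ℝ)).restrict S),
      ENNReal.ofReal (|K' (u - w) - K' (-w)| * pnorm w ^ α)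
        ≤ ENNReal.ofReal (Cη * pnorm u ^ η) *
            (2 * ENNReal.ofReal (pnorm w ^ β) + ENNReal.ofReal (pnorm (u - w) ^ β)) := by
    apply ae_restrict_of_ae
    have hsing : ∀ z : ℝ × ℝ, (volume : Measure (ℝ × ℝ)) ({z} : Set (ℝ × ℝ)) = 0 := fun z => by
      have : ({z} : Set (ℝ × ℝ)) = ({z.1} : Set ℝ) ×ˢ ({z.2} : Set ℝ) := by
        ext w; simp [Prod.ext_iff]
      rw [Measure.volume_eq_prod, this, Measure.prod_prod]; simp
    have hnull : (volume : Measure (ℝ × ℝ)) ({0, u} : Set (ℝ × ℝ)) = 0 := by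
      rw [Set.insert_eq]
      exact measure_union_null (hsing 0) (hsing u)
    filter_upwards [compl_mem_ae_iff.mpr hnull] with w hw
    have hw0 : w ≠ 0 := fun h => hw (by simp [h])
    have hwu : w ≠ u := fun h => hw (by simp [h])
    by_cases hu : u = 0
    · subst hu
      simp only [zero_sub, sub_self, abs_zero, zero_mul, ENNReal.ofReal_zero]
      exact zero_le
    · have h1 : 0 < pnorm (u - w) := pnorm_pos (sub_ne_zero.mpr (Ne.symm hwu))
      have h2 : 0 < pnorm w := pnorm_pos hw0
      have huw : u - w - -w = u := by abel
      have hKest : |K' (u - w) - K' (-w)|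
          ≤ Cη * pnorm u ^ η * (pnorm (u - w) ^ (-2 - η) + pnorm w ^ (-2 - η)) := by
        have := hKb (u - w) (-w) (sub_ne_zero.mpr (Ne.symm hwu)) (neg_ne_zero.mpr hw0)
        rwa [huw, pnorm_neg] at this
      have hprod : (pnorm (u - w) ^ (-2 - η) + pnorm w ^ (-2 - η)) * pnorm w ^ α
          ≤ 2 * pnorm w ^ β + pnorm (u - w) ^ β := by
        have e2 : pnorm w ^ (-2 - η) * pnorm w ^ α = pnorm w ^ β := by
          rw [← Real.rpow_add h2]; congr 1; rw [hβ]; ring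
        have e1 : pnorm (u - w) ^ (-2 - η) * pnorm w ^ α
            ≤ pnorm w ^ β + pnorm (u - w) ^ β := by
          rcases le_total (pnorm w) (pnorm (u - w)) with hc | hc
          · have hmono : pnorm (u - w) ^ (-2 - η) ≤ pnorm w ^ (-2 - η) :=
              Real.rpow_le_rpow_of_nonpos h2 hc (by linarith)
            calc pnorm (u - w) ^ (-2 - η) * pnorm w ^ α
                ≤ pnorm w ^ (-2 - η) * pnorm w ^ α :=
                  mul_le_mul_of_nonneg_right hmono (Real.rpow_nonneg h2.le α)
              _ = pnorm w ^ β := e2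
              _ ≤ pnorm w ^ β + pnorm (u - w) ^ β :=
                  le_add_of_nonneg_right (Real.rpow_nonneg h1.le β)
          · have hmono : pnorm w ^ α ≤ pnorm (u - w) ^ α :=
              Real.rpow_le_rpow_of_nonpos h1 hc (by linarith)
            calc pnorm (u - w) ^ (-2 - η) * pnorm w ^ α
                ≤ pnorm (u - w) ^ (-2 - η) * pnorm (u - w) ^ α :=
                  mul_le_mul_of_nonneg_left hmono (Real.rpow_nonneg h1.le _)
              _ = pnorm (u - w) ^ β := by
                  rw [← Real.rpow_add h1]; congr 1; rw [hβ]; ring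
              _ ≤ pnorm w ^ β + pnorm (u - w) ^ β :=
                  le_add_of_nonneg_left (Real.rpow_nonneg h2.le β)
        nlinarith [Real.rpow_nonneg h2.le β, Real.rpow_nonneg h1.le β]
      have hfinal : |K' (u - w) - K' (-w)| * pnorm w ^ α
          ≤ (Cη * pnorm u ^ η) * (2 * pnorm w ^ β + pnorm (u - w) ^ β) := by
        calc |K' (u - w) - K' (-w)| * pnorm w ^ α
            ≤ (Cη * pnorm u ^ η * (pnorm (u - w) ^ (-2 - η) + pnorm w ^ (-2 - η)))
                * pnorm w ^ α :=
              mul_le_mul_of_nonneg_right hKest (Real.rpow_nonneg h2.le α)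
          _ = (Cη * pnorm u ^ η)
                * ((pnorm (u - w) ^ (-2 - η) + pnorm w ^ (-2 - η)) * pnorm w ^ α) := by ring
          _ ≤ (Cη * pnorm u ^ η) * (2 * pnorm w ^ β + pnorm (u - w) ^ β) :=
              mul_le_mul_of_nonneg_left hprod (mul_nonneg hCη.le hru)
      refine le_trans (ENNReal.ofReal_le_ofReal hfinal) ?_
      rw [ENNReal.ofReal_mul (mul_nonneg hCη.le hru),
        ENNReal.ofReal_add (mul_nonneg (by norm_num) (Real.rpow_nonneg h2.le β))
          (Real.rpow_nonneg h1.le β),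
        ENNReal.ofReal_mul (by norm_num : (0:ℝ) ≤ 2)]
      norm_num
  -- translation invariance for the second term
  have hT : ∫⁻ w : ℝ × ℝ in {w : ℝ × ℝ | pnorm (u - w) ≤ R},
      ENNReal.ofReal (pnorm (u - w) ^ β) = M := by
    have hkey := (Measure.measurePreserving_sub_left (volume : Measure (ℝ × ℝ))
        u).setLIntegral_comp_preimage_emb
      (MeasurableEquiv.subLeft u).measurableEmbedding
      (fun v => ENNReal.ofReal (pnorm v ^ β)) {v : ℝ × ℝ | pnorm v ≤ R}
    exact hkey
  have hI1 : ∫⁻ w : ℝ × ℝ in S, ENNReal.ofReal (pnorm w ^ β) ≤ M :=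
    lintegral_mono_set (fun w hw => hw.1)
  have hI2 : ∫⁻ w : ℝ × ℝ in S, ENNReal.ofReal (pnorm (u - w) ^ β) ≤ M :=
    le_trans (lintegral_mono_set (fun w hw => hw.2)) (le_of_eq hT)
  calc ∫⁻ w in S, ENNReal.ofReal (|K' (u - w) - K' (-w)| * pnorm w ^ α)
      ≤ ∫⁻ w in S, ENNReal.ofReal (Cη * pnorm u ^ η) *
          (2 * ENNReal.ofReal (pnorm w ^ β) + ENNReal.ofReal (pnorm (u - w) ^ β)) :=
        lintegral_mono_ae hae
    _ = ENNReal.ofReal (Cη * pnorm u ^ η) *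
          ∫⁻ w in S, (2 * ENNReal.ofReal (pnorm w ^ β) + ENNReal.ofReal (pnorm (u - w) ^ β)) :=
        lintegral_const_mul' _ _ ENNReal.ofReal_ne_top
    _ = ENNReal.ofReal (Cη * pnorm u ^ η) *
          (2 * (∫⁻ w in S, ENNReal.ofReal (pnorm w ^ β))
            + ∫⁻ w in S, ENNReal.ofReal (pnorm (u - w) ^ β)) := by
        rw [lintegral_add_left (hf1m.const_mul 2),
          lintegral_const_mul' 2 _ (by norm_num)]
    _ ≤ ENNReal.ofReal (Cη * pnorm u ^ η) * (2 * M + M) := by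
        exact mul_le_mul_right (add_le_add (mul_le_mul_right hI1 2) hI2) _
    _ ≤ ENNReal.ofReal (Cη * (3 * M.toReal + 1) * pnorm u ^ η) := by
        have h3 : 2 * M + M = ENNReal.ofReal (3 * M.toReal) := by
          have : 2 * M + M = 3 * M := by ring
          rw [this, ENNReal.ofReal_mul (by norm_num), ENNReal.ofReal_toReal hM.ne]
          norm_num
        rw [h3, ← ENNReal.ofReal_mul (mul_nonneg hCη.le hru)]
        apply ENNReal.ofReal_le_ofReal
        nlinarith [mul_nonneg hCη.le hru]
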